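/- Let H be a normal subgroup of Homeo_c(𝔻,ω), let h ∈ H, and let 𝔻' be a closed topological disc contained in the interior of 𝔻 such that h(𝔻') ∩ 𝔻' = ∅. Then for all f, g ∈ Homeo_c(𝔻,ω) supported in the interior of 𝔻', the commutator [f,g] = f∘g∘f⁻¹∘g⁻¹ belongs to H. -/

import Mathlib

open MeasureTheory Set Filter Topology

noncomputable section

/-- The closed unit disc `𝔻 = {p : |p| ≤ 1}` in the plane, with total
`discMeasure`-measure `1/2`. -/
def Disc : Set (ℝ × ℝ) := {p | p.1 ^ 2 + p.2 ^ 2 ≤ 1}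

/-- The open unit disc, i.e. the interior of `𝔻`. -/
def OpenDisc : Set (ℝ × ℝ) := {p | p.1 ^ 2 + p.2 ^ 2 < 1}

/-- The measure `μ = (1/(2π)) · (Lebesgue measure)` induced by the area form
`ω = (1/(2π)) dx ∧ dy`. -/
def discMeasure : Measure (ℝ × ℝ) := ENNReal.ofReal (1 / (2 * Real.pi)) • volume

/-- `Homeo_c(𝔻, ω)`: the group of area-preserving homeomorphisms of the disc that are the
identity on a neighborhood of the boundary.  Since such a homeomorphism extends uniquely (by
the identity) to a homeomorphism of the plane which is the identity outside a compact subset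
of the open disc, we realize `Homeo_c(𝔻, ω)` as the subgroup of `Equiv.Perm (ℝ × ℝ)`
(whose multiplication is composition, `(φ * ψ) p = φ (ψ p)`) consisting of the
`discMeasure`-preserving homeomorphisms of the plane equal to the identity outside a compact
subset of the open unit disc. -/
def HomeoDisc : Subgroup (Equiv.Perm (ℝ × ℝ)) where
  carrier := {φ : Equiv.Perm (ℝ × ℝ) | Continuous φ ∧ Continuous φ.symm ∧
      MeasurePreserving φ discMeasure discMeasure ∧
      ∃ K : Set (ℝ × ℝ), IsCompact K ∧ K ⊆ OpenDisc ∧ ∀ p ∉ K, φ p = p}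
  one_mem' := ⟨continuous_id, continuous_id, MeasurePreserving.id _, ∅, isCompact_empty,
    empty_subset _, fun _ _ => rfl⟩
  mul_mem' := by
    rintro a b ⟨ha1, ha2, ha3, Ka, hKa, hKaD, hKa'⟩ ⟨hb1, hb2, hb3, Kb, hKb, hKbD, hKb'⟩
    refine ⟨ha1.comp hb1, hb2.comp ha2, ha3.comp hb3, Ka ∪ Kb, hKa.union hKb,
      union_subset hKaD hKbD, fun p hp => ?_⟩
    have hpa : p ∉ Ka := fun h => hp (Or.inl h)
    have hpb : p ∉ Kb := fun h => hp (Or.inr h)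
    show a (b p) = p
    rw [hKb' p hpb, hKa' p hpa]
  inv_mem' := by
    rintro a ⟨ha1, ha2, ha3, K, hK, hKD, hK'⟩
    refine ⟨ha2, ha1, ?_, K, hK, hKD, fun p hp => ?_⟩
    · exact MeasurePreserving.symm
        (⟨a, ha1.measurable, ha2.measurable⟩ : (ℝ × ℝ) ≃ᵐ (ℝ × ℝ)) ha3
    · have h1 : a p = p := hK' p hp
      calc a⁻¹ p = a⁻¹ (a p) := by rw [h1]
        _ = p := a.symm_apply_apply p

/-- `φ` is supported in `S`: every non-fixed point of `φ` lies in `S`. -/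
def SupportedIn (φ : Equiv.Perm (ℝ × ℝ)) (S : Set (ℝ × ℝ)) : Prop :=
  ∀ p, φ p ≠ p → p ∈ S

/-- Let `H` be a normal subgroup of `Homeo_c(𝔻, ω)`, `h ∈ H`, and let `𝔻'` be a closed
topological disc contained in the interior of `𝔻` with `h(𝔻') ∩ 𝔻' = ∅`.  Then for all
`f, g ∈ Homeo_c(𝔻, ω)` supported in the interior of `𝔻'`, the commutator
`[f, g] = f ∘ g ∘ f⁻¹ ∘ g⁻¹` belongs to `H`. -/
theorem homeoDisc_commutator_mem_of_displaced (H : Subgroup ↥HomeoDisc) (hH : H.Normal)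
    (h : ↥HomeoDisc) (hh : h ∈ H)
    (D' : Set (ℝ × ℝ))
    (hD'disc : ∃ e : ↥Disc → ℝ × ℝ, Topology.IsEmbedding e ∧ Set.range e = D')
    (hD'sub : D' ⊆ OpenDisc)
    (hdisj : (⇑(h : Equiv.Perm (ℝ × ℝ)) '' D') ∩ D' = ∅)
    (f g : ↥HomeoDisc)
    (hf : SupportedIn (f : Equiv.Perm (ℝ × ℝ)) (interior D'))
    (hg : SupportedIn (g : Equiv.Perm (ℝ × ℝ)) (interior D')) :
    f * g * f⁻¹ * g⁻¹ ∈ H := by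
  set c : ↥HomeoDisc := h * f * h⁻¹ with hc
  -- c is supported in h(D'), disjoint from D', hence commutes with g
  have hdisjperm : Equiv.Perm.Disjoint ((c : Equiv.Perm (ℝ × ℝ))) (g : Equiv.Perm (ℝ × ℝ)) := by
    intro p
    by_contra hcon
    push_neg at hcon
    obtain ⟨h1, h2⟩ := hcon
    have hpD : p ∈ D' := interior_subset (hg p h2)
    have h1' : ((f : Equiv.Perm (ℝ × ℝ)) ((h : Equiv.Perm (ℝ × ℝ))⁻¹ p))
        ≠ (h : Equiv.Perm (ℝ × ℝ))⁻¹ p := by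
      intro heq
      apply h1
      have : ((c : Equiv.Perm (ℝ × ℝ))) p
          = (h : Equiv.Perm (ℝ × ℝ)) ((f : Equiv.Perm (ℝ × ℝ))
            ((h : Equiv.Perm (ℝ × ℝ))⁻¹ p)) := by
        simp [hc, Equiv.Perm.mul_apply]
      rw [this, heq]
      simp
    have hmemD : (h : Equiv.Perm (ℝ × ℝ))⁻¹ p ∈ D' := interior_subset (hf _ h1')
    have hmem : p ∈ (⇑(h : Equiv.Perm (ℝ × ℝ)) '' D') ∩ D' :=
      ⟨⟨_, hmemD, by simp⟩, hpD⟩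
    rw [hdisj] at hmem
    exact hmem
  have hcommperm : ((c : Equiv.Perm (ℝ × ℝ))) * (g : Equiv.Perm (ℝ × ℝ))
      = (g : Equiv.Perm (ℝ × ℝ)) * (c : Equiv.Perm (ℝ × ℝ)) := hdisjperm.commute
  have hcomm : c * g = g * c := Subtype.ext (by push_cast; exact hcommperm)
  have hcomm' : c⁻¹ * g = g * c⁻¹ := by
    have := (Commute.inv_left (a := c) (b := g) hcomm)
    exact this
  -- k = f * c⁻¹ = (f h f⁻¹) h⁻¹ ∈ H
  have hkH : f * c⁻¹ ∈ H := by
    have hk : f * c⁻¹ = (f * h * f⁻¹) * h⁻¹ := by rw [hc]; group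
    rw [hk]
    exact H.mul_mem (hH.conj_mem h hh f) (H.inv_mem hh)
  -- [f, g] = [f c⁻¹, g]
  have hfinal : f * g * f⁻¹ * g⁻¹ = (f * c⁻¹) * g * (f * c⁻¹)⁻¹ * g⁻¹ := by
    have e1 : (f * c⁻¹) * g * (f * c⁻¹)⁻¹ * g⁻¹ = f * (c⁻¹ * g) * (c * f⁻¹) * g⁻¹ := by
      group
    rw [e1, hcomm']
    group
  rw [hfinal]
  have : (f * c⁻¹) * g * (f * c⁻¹)⁻¹ * g⁻¹ = (f * c⁻¹) * (g * (f * c⁻¹)⁻¹ * g⁻¹) := by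
    group
  rw [this]
  exact H.mul_mem hkH (hH.conj_mem _ (H.inv_mem hkH) g)

end
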